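/- In a labelled CFG, suppose v is a branching node whose successors are exactly v1 and v2, with Def(v) = ∅ and Use(v) = F (the free variables of its branch condition). If v ∈ Q then rv(Q,v) = F ∪ rv(Q,v1) ∪ rv(Q,v2). -/

import Mathlib

namespace Slicing

/-- A path is a nonempty list of nodes, consecutive ones related by `succ`,
starting at `v` and ending at `v'`. -/
def IsPath {V : Type} (succ : V → V → Prop) (p : List V) (v v' : V) : Prop :=
  p.Chain' succ ∧ p.head? = some v ∧ p.getLast? = some v'

/-- A control-flow graph: an edge relation and an `End` node with no successors,
reachable from every node. -/
structure CFG (V : Type) where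
  succ : V → V → Prop
  End : V
  end_no_succ : ∀ w, ¬ succ End w
  reach_end : ∀ v, ∃ p, IsPath succ p v End

variable {V : Type}

/-- `v1` postdominates `v`. -/
def PD (G : CFG V) (v v1 : V) : Prop :=
  ∀ p, IsPath G.succ p v G.End → v1 ∈ p

/-- `v1` is a proper postdominator of `v`. -/
def ProperPD (G : CFG V) (v v1 : V) : Prop :=
  PD G v v1 ∧ v1 ≠ v

/-- `v1` is a first proper postdominator of `v`: every path from `v` to any other
proper postdominator of `v` contains `v1`. -/
def IsFPPD (G : CFG V) (v v1 : V) : Prop :=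
  ProperPD G v v1 ∧
    ∀ v2, ProperPD G v v2 → v2 ≠ v1 → ∀ p, IsPath G.succ p v v2 → v1 ∈ p

/-- Maximum number of edges of an acyclic path from `v` to `v'`. -/
noncomputable def LAP (G : CFG V) (v v' : V) : ℕ :=
  sSup {n | ∃ p, IsPath G.succ p v v' ∧ p.Nodup ∧ p.length = n + 1}

/-- A node is cycle-inducing if, with `v'` its first proper postdominator,
some successor `vi` of `v` satisfies `LAP vi v' ≥ LAP v v'`. -/
def CycleInducing (G : CFG V) (v : V) : Prop :=
  ∃ v', IsFPPD G v v' ∧ ∃ vi, G.succ v vi ∧ LAP G v v' ≤ LAP G vi v'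

/-- `v` stays outside `Q` until `v'`: every path from `v` to `v'` in which `v'`
occurs only at the final position contains no node of `Q` except possibly `v'`. -/
def StaysOutside (G : CFG V) (Q : Set V) (v v' : V) : Prop :=
  ∀ p, IsPath G.succ p v v' → v' ∉ p.dropLast → ∀ w ∈ p, w ∈ Q → w = v'

/-- `v2` is data dependent on `v1`. -/
def DataDep {Var : Type} (G : CFG V) (Def Use : V → Set Var) (v1 v2 : V) : Prop :=
  ∃ x, x ∈ Use v2 ∧ x ∈ Def v1 ∧
    ∃ p, IsPath G.succ p v1 v2 ∧ 2 ≤ p.length ∧ ∀ w ∈ p.tail.dropLast, x ∉ Def w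

/-- `Q` is closed under data dependence. -/
def ClosedDD {Var : Type} (G : CFG V) (Def Use : V → Set Var) (Q : Set V) : Prop :=
  ∀ v1 v2, v2 ∈ Q → DataDep G Def Use v1 v2 → v1 ∈ Q

/-- The `Q`-relevant variables at `v`. -/
def rv {Var : Type} (G : CFG V) (Def Use : V → Set Var) (Q : Set V) (v : V) : Set Var :=
  {x | ∃ v' ∈ Q, x ∈ Use v' ∧
    ∃ p, IsPath G.succ p v v' ∧ p.Nodup ∧ ∀ w ∈ p, w ≠ v' → x ∉ Def w}

/-- `v'` is a next visible in `Q` of `v`. -/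
def IsNextVisible (G : CFG V) (Q : Set V) (v v' : V) : Prop :=
  (v' ∈ Q ∨ v' = G.End) ∧
    ∀ u, (u ∈ Q ∨ u = G.End) → ∀ p, IsPath G.succ p v u → v' ∈ p

/-- `Q` provides next visibles. -/
def ProvidesNextVisibles (G : CFG V) (Q : Set V) : Prop :=
  ∀ v, ∃ v', IsNextVisible G Q v v'

/-- A weak slice set provides next visibles and is closed under data dependence. -/
def WeakSliceSet {Var : Type} (G : CFG V) (Def Use : V → Set Var) (Q : Set V) : Prop :=
  ProvidesNextVisibles G Q ∧ ClosedDD G Def Use Q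

end Slicing

namespace Slicing

variable {V : Type}

lemma IsPath.ne_nil' {succ : V → V → Prop} {p : List V} {v v' : V}
    (h : IsPath succ p v v') : p ≠ [] := by
  intro hn; subst hn; simp [IsPath] at h

lemma path_suffix {succ : V → V → Prop} :
    ∀ (p : List V) (v v' w : V), IsPath succ p v v' → w ∈ p →
      ∃ q, IsPath succ q w v' ∧ q.Sublist p := by
  intro p
  induction p with
  | nil => intro v v' w h; simp [IsPath] at h
  | cons a t ih =>
    intro v v' w h hw
    rcases List.mem_cons.mp hw with rfl | hw
    · exact ⟨w :: t, ⟨h.1, by simp, h.2.2⟩, List.Sublist.refl _⟩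
    · have ht : t ≠ [] := List.ne_nil_of_mem hw
      obtain ⟨b, s, rfl⟩ := List.exists_cons_of_ne_nil ht
      have hpath : IsPath succ (b :: s) b v' :=
        ⟨(List.isChain_cons_cons.mp h.1).2, by simp, by
          rw [← h.2.2]; simp [List.getLast?_cons_cons]⟩
      obtain ⟨q, hq, hsub⟩ := ih b v' w hpath hw
      exact ⟨q, hq, hsub.trans (List.sublist_cons_self _ _)⟩

lemma rv_succ_subset {Var : Type} (G : CFG V) (Def Use : V → Set Var) (Q : Set V)
    {v w : V} (h : G.succ v w) (hdef : Def v = ∅) :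
    rv G Def Use Q w ⊆ rv G Def Use Q v := by
  rintro x ⟨v', hQ', hx, p, hp, hnd, hfree⟩
  by_cases hvp : v ∈ p
  · obtain ⟨q, hq, hsub⟩ := path_suffix p w v' v hp hvp
    exact ⟨v', hQ', hx, q, hq, hsub.nodup hnd, fun u hu => hfree u (hsub.subset hu)⟩
  · refine ⟨v', hQ', hx, v :: p, ⟨?_, by simp, ?_⟩, ?_, ?_⟩
    · refine List.isChain_cons.mpr ⟨?_, hp.1⟩
      intro b hb
      rw [hp.2.1] at hb
      simp at hb; subst hb; exact h
    · obtain ⟨c, t, rfl⟩ := List.exists_cons_of_ne_nil hp.ne_nil'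
      rw [← hp.2.2]; simp [List.getLast?_cons_cons]
    · exact List.nodup_cons.mpr ⟨hvp, hnd⟩
    · intro u hu hne
      rcases List.mem_cons.mp hu with rfl | hu
      · simp [hdef]
      · exact hfree u hu hne

/-- For a branching node `v ∈ Q` with successors exactly `v1` and `v2`,
`Def v = ∅` and `Use v = F`, we have `rv(Q,v) = F ∪ rv(Q,v1) ∪ rv(Q,v2)`. -/
theorem rv_branch {V Var : Type} [Fintype V] (G : CFG V)
    (Def Use : V → Set Var) (Q : Set V) (v v1 v2 : V) (F : Set Var)
    (hsucc1 : G.succ v v1) (hsucc2 : G.succ v v2)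
    (huniq : ∀ w, G.succ v w → w = v1 ∨ w = v2)
    (hdef : Def v = ∅) (huse : Use v = F) (hQ : v ∈ Q) :
    rv G Def Use Q v = F ∪ rv G Def Use Q v1 ∪ rv G Def Use Q v2 := by
  ext x
  simp only [Set.mem_union]
  constructor
  · rintro ⟨v', hv'Q, hxuse, p, hp, hnd, hfree⟩
    obtain ⟨a, t, rfl⟩ := List.exists_cons_of_ne_nil hp.ne_nil'
    have ha : v = a := by have := hp.2.1; simpa using this.symm
    subst ha
    cases t with
    | nil =>
      have hv' : v' = v := by have := hp.2.2; simpa using this.symm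
      subst hv'
      left; left; rw [← huse]; exact hxuse
    | cons b s =>
      have hsb : G.succ v b := (List.isChain_cons_cons.mp hp.1).1
      have hpath : IsPath G.succ (b :: s) b v' :=
        ⟨(List.isChain_cons_cons.mp hp.1).2, by simp, by
          rw [← hp.2.2]; simp [List.getLast?_cons_cons]⟩
      have hmem : x ∈ rv G Def Use Q b :=
        ⟨v', hv'Q, hxuse, b :: s, hpath, (List.nodup_cons.mp hnd).2,
          fun u hu => hfree u (List.mem_cons_of_mem _ hu)⟩
      rcases huniq b hsb with rfl | rfl
      · left; right; exact hmem
      · right; exact hmem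
  · rintro ((hF | h1) | h2)
    · refine ⟨v, hQ, by rw [huse]; exact hF, [v], ⟨List.isChain_singleton v, by simp, by simp⟩, by simp, ?_⟩
      intro u hu hne
      simp at hu; subst hu; exact absurd rfl hne
    · exact rv_succ_subset G Def Use Q hsucc1 hdef h1
    · exact rv_succ_subset G Def Use Q hsucc2 hdef h2

end Slicing
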